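/- If y ∈ M(X,Z) (the column space of the matrix [X, Z₁,…,Z_r]), then the infimum of l̃(β,κ₀,κ,y) = n log κ₀ + log det Ṽ(κ) + κ₀⁻¹ (y − Xβ)'Ṽ(κ)⁻¹(y − Xβ) over β ∈ ℝᵐ, κ₀ ∈ (0,∞), κ ∈ [0,∞)^r is −∞. -/

import Mathlib

open Matrix Filter

noncomputable def Vtilde {n r : ℕ} {k : Fin r → ℕ}
    (Z : ∀ i : Fin r, Matrix (Fin n) (Fin (k i)) ℝ) (κ : Fin r → ℝ) :
    Matrix (Fin n) (Fin n) ℝ :=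
  1 + ∑ i, κ i • (Z i * (Z i)ᵀ)

noncomputable def colSpaceXZ {n m r : ℕ} {k : Fin r → ℕ}
    (X : Matrix (Fin n) (Fin m) ℝ) (Z : ∀ i : Fin r, Matrix (Fin n) (Fin (k i)) ℝ) :
    Submodule ℝ (Fin n → ℝ) :=
  LinearMap.range X.mulVecLin ⊔ ⨆ i, LinearMap.range (Z i).mulVecLin

noncomputable def sXZ {n m r : ℕ} {k : Fin r → ℕ}
    (X : Matrix (Fin n) (Fin m) ℝ) (Z : ∀ i : Fin r, Matrix (Fin n) (Fin (k i)) ℝ)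
    (y : Fin n → ℝ) : ℝ :=
  let L : EuclideanSpace ℝ (Fin n) ≃ₗ[ℝ] (Fin n → ℝ) :=
    WithLp.linearEquiv 2 ℝ (Fin n → ℝ)
  let S : Submodule ℝ (EuclideanSpace ℝ (Fin n)) :=
    (colSpaceXZ X Z).map L.symm.toLinearMap
  ‖(Submodule.orthogonalProjectionOnto Sᗮ (L.symm y) : EuclideanSpace ℝ (Fin n))‖ ^ 2

noncomputable def ltilde {n m r : ℕ} {k : Fin r → ℕ}
    (X : Matrix (Fin n) (Fin m) ℝ) (Z : ∀ i : Fin r, Matrix (Fin n) (Fin (k i)) ℝ)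
    (y : Fin n → ℝ) (β : Fin m → ℝ) (κ₀ : ℝ) (κ : Fin r → ℝ) : ℝ :=
  n * Real.log κ₀ + Real.log (Vtilde Z κ).det
    + κ₀⁻¹ * ((y - X.mulVec β) ⬝ᵥ (Vtilde Z κ)⁻¹.mulVec (y - X.mulVec β))

section AuxLemmas
variable {n r : ℕ} {k : Fin r → ℕ}

private lemma dot_self_nonneg' {d : ℕ} (v : Fin d → ℝ) : 0 ≤ v ⬝ᵥ v :=
  Finset.sum_nonneg fun _ _ => mul_self_nonneg _


private lemma sum_mulVec' {α : Type*} [Fintype α] {d e : ℕ}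
    (A : α → Matrix (Fin d) (Fin e) ℝ) (x : Fin e → ℝ) :
    (∑ i, A i) *ᵥ x = ∑ i, A i *ᵥ x := by
  ext j
  simp only [Matrix.mulVec, dotProduct, Matrix.sum_apply, Finset.sum_apply,
    Finset.sum_mul]
  exact Finset.sum_comm


private lemma sum_dot' {α : Type*} [Fintype α] {d : ℕ}
    (v : α → Fin d → ℝ) (w : Fin d → ℝ) :
    (∑ i, v i) ⬝ᵥ w = ∑ i, v i ⬝ᵥ w := by
  simp only [dotProduct, Finset.sum_apply, Finset.sum_mul]
  exact Finset.sum_comm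


private lemma dot_sum' {α : Type*} [Fintype α] {d : ℕ}
    (w : Fin d → ℝ) (v : α → Fin d → ℝ) :
    w ⬝ᵥ (∑ i, v i) = ∑ i, w ⬝ᵥ v i := by
  rw [dotProduct_comm, sum_dot']
  exact Finset.sum_congr rfl fun i _ => dotProduct_comm _ _


private lemma mulVec_dot' {d e : ℕ} (A : Matrix (Fin d) (Fin e) ℝ)
    (x : Fin e → ℝ) (y : Fin d → ℝ) :
    (A *ᵥ x) ⬝ᵥ y = x ⬝ᵥ (Aᵀ *ᵥ y) := by
  rw [Matrix.dotProduct_mulVec, Matrix.vecMul_transpose]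


private lemma ZZt_dot {d e : ℕ} (A : Matrix (Fin d) (Fin e) ℝ) (b : Fin d → ℝ) :
    ((A * Aᵀ) *ᵥ b) ⬝ᵥ b = (Aᵀ *ᵥ b) ⬝ᵥ (Aᵀ *ᵥ b) := by
  rw [← Matrix.mulVec_mulVec]
  exact mulVec_dot' A (Aᵀ *ᵥ b) b


private lemma vtilde_posdef {n r : ℕ} {k : Fin r → ℕ}
    (Z : ∀ i : Fin r, Matrix (Fin n) (Fin (k i)) ℝ) (κ : Fin r → ℝ)
    (hκ : ∀ i, 0 ≤ κ i) : (Vtilde Z κ).PosDef := by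
  have hsum : (∑ i, κ i • (Z i * (Z i)ᵀ)).PosSemidef := by
    refine Matrix.posSemidef_iff_dotProduct_mulVec.mpr ⟨?_, ?_⟩
    · simp [Matrix.IsHermitian, Matrix.conjTranspose_eq_transpose_of_trivial,
        Matrix.transpose_sum, Matrix.transpose_smul, Matrix.transpose_mul,
        Matrix.transpose_transpose]
    · intro x
      have h1 : (∑ i, κ i • (Z i * (Z i)ᵀ)) *ᵥ x = ∑ i, κ i • ((Z i * (Z i)ᵀ) *ᵥ x) := by
        rw [sum_mulVec']
        exact Finset.sum_congr rfl fun i _ => Matrix.smul_mulVec _ _ _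
      rw [star_trivial, h1, dot_sum']
      refine Finset.sum_nonneg fun i _ => ?_
      rw [dotProduct_smul, ← Matrix.mulVec_mulVec, smul_eq_mul]
      have h2 : x ⬝ᵥ (Z i *ᵥ ((Z i)ᵀ *ᵥ x)) = ((Z i)ᵀ *ᵥ x) ⬝ᵥ ((Z i)ᵀ *ᵥ x) := by
        rw [Matrix.dotProduct_mulVec, ← Matrix.mulVec_transpose]
      rw [h2]
      exact mul_nonneg (hκ i) (dot_self_nonneg' _)
  have := (Matrix.PosDef.one (n := Fin n) (R := ℝ)).add_posSemidef hsum
  simpa [Vtilde] using this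


private lemma cs' {d : ℕ} (u v : Fin d → ℝ) :
    u ⬝ᵥ v ≤ Real.sqrt (u ⬝ᵥ u) * Real.sqrt (v ⬝ᵥ v) := by
  have := Real.sum_mul_le_sqrt_mul_sqrt Finset.univ u v
  simpa [dotProduct, sq] using this


private lemma quad_bound
    (Z : ∀ i : Fin r, Matrix (Fin n) (Fin (k i)) ℝ)
    (u : ∀ i, Fin (k i) → ℝ) {t : ℝ} (ht : 0 < t) :
    (∑ i, Z i *ᵥ u i) ⬝ᵥ (Vtilde Z (fun _ => t))⁻¹ *ᵥ (∑ i, Z i *ᵥ u i)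
      ≤ (∑ i, Real.sqrt (u i ⬝ᵥ u i)) ^ 2 / t := by
  set V := Vtilde Z (fun _ => t) with hVdef
  have hV : V.PosDef := vtilde_posdef Z _ (fun _ => ht.le)
  have hdet : IsUnit V.det := hV.det_pos.ne'.isUnit
  set z := ∑ i, Z i *ᵥ u i with hzdef
  set b := V⁻¹ *ᵥ z with hbdef
  have hzb : V *ᵥ b = z := by
    rw [hbdef, Matrix.mulVec_mulVec, Matrix.mul_nonsing_inv _ hdet, Matrix.one_mulVec]
  set Q := z ⬝ᵥ b with hQdef
  set w := fun i => (Z i)ᵀ *ᵥ b with hwdef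
  have hQ1 : Q = b ⬝ᵥ b + t * ∑ i, w i ⬝ᵥ w i := by
    rw [hQdef, ← hzb, hVdef]
    show ((1 + ∑ i, (fun _ : Fin r => t) i • (Z i * (Z i)ᵀ)) *ᵥ b) ⬝ᵥ b = _
    rw [Matrix.add_mulVec, Matrix.one_mulVec, sum_mulVec', add_dotProduct,
      sum_dot', Finset.mul_sum]
    congr 1
    refine Finset.sum_congr rfl fun i _ => ?_
    rw [Matrix.smul_mulVec, smul_dotProduct, smul_eq_mul]
    exact congrArg (t * ·) (ZZt_dot (Z i) b)
  have hwnn : ∀ i ∈ Finset.univ, (0:ℝ) ≤ w i ⬝ᵥ w i := fun i _ => dot_self_nonneg' _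
  have hQnn : 0 ≤ Q := by
    rw [hQ1]
    exact add_nonneg (dot_self_nonneg' _)
      (mul_nonneg ht.le (Finset.sum_nonneg hwnn))
  have hterm : ∀ i, w i ⬝ᵥ w i ≤ Q / t := by
    intro i
    rw [le_div_iff₀ ht, mul_comm]
    calc t * (w i ⬝ᵥ w i) ≤ t * ∑ j, w j ⬝ᵥ w j :=
          mul_le_mul_of_nonneg_left (Finset.single_le_sum hwnn (Finset.mem_univ i)) ht.le
      _ ≤ Q := by rw [hQ1]; linarith [dot_self_nonneg' b]
  have hQ2 : Q = ∑ i, u i ⬝ᵥ w i := by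
    rw [hQdef, hzdef, sum_dot']
    exact Finset.sum_congr rfl fun i _ => mulVec_dot' (Z i) (u i) b
  set C := ∑ i, Real.sqrt (u i ⬝ᵥ u i) with hCdef
  have hCnn : 0 ≤ C := Finset.sum_nonneg fun i _ => Real.sqrt_nonneg _
  have hQC : Q ≤ C * Real.sqrt (Q / t) := by
    calc Q = ∑ i, u i ⬝ᵥ w i := hQ2
      _ ≤ ∑ i, Real.sqrt (u i ⬝ᵥ u i) * Real.sqrt (Q / t) := by
          refine Finset.sum_le_sum fun i _ => ?_
          calc u i ⬝ᵥ w i ≤ Real.sqrt (u i ⬝ᵥ u i) * Real.sqrt (w i ⬝ᵥ w i) := cs' _ _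
            _ ≤ Real.sqrt (u i ⬝ᵥ u i) * Real.sqrt (Q / t) :=
                mul_le_mul_of_nonneg_left (Real.sqrt_le_sqrt (hterm i)) (Real.sqrt_nonneg _)
      _ = C * Real.sqrt (Q / t) := (Finset.sum_mul ..).symm
  have hs : Real.sqrt (Q / t) ^ 2 = Q / t := Real.sq_sqrt (div_nonneg hQnn ht.le)
  set s := Real.sqrt (Q / t) with hsdef
  have hsnn : 0 ≤ s := Real.sqrt_nonneg _
  have hQs : Q = t * s ^ 2 := by
    rw [hs, mul_comm, div_mul_cancel₀ _ ht.ne']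
  rcases eq_or_lt_of_le hsnn with hs0 | hs0
  · have hQ0 : Q = 0 := by rw [hQs, ← hs0]; ring
    exact hQ0.le.trans (div_nonneg (sq_nonneg C) ht.le)
  · have hts : t * s ≤ C := by
      refine le_of_mul_le_mul_right ?_ hs0
      calc t * s * s = t * s ^ 2 := by ring
        _ = Q := hQs.symm
        _ ≤ C * s := hQC
    have hQt : Q * t = (t * s) * (t * s) := by rw [hQs]; ring
    rw [le_div_iff₀ ht]
    calc Q * t = (t * s) * (t * s) := hQt
      _ ≤ C * C := mul_le_mul hts hts (mul_nonneg ht.le hsnn) hCnn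
      _ = C ^ 2 := by ring


private lemma det_bound
    (Z : ∀ i : Fin r, Matrix (Fin n) (Fin (k i)) ℝ) :
    ∃ c : ℝ, 0 ≤ c ∧ ∀ t : ℝ, 0 ≤ t →
      (Vtilde Z (fun _ => t)).det ≤ (∑ i, k i).factorial * (1 + t * c) ^ (∑ i, k i) := by
  classical
  set W : Matrix (Fin n) ((i : Fin r) × Fin (k i)) ℝ :=
    Matrix.of (fun a p => Z p.1 a p.2) with hWdef
  refine ⟨∑ p, ∑ q, |(Wᵀ * W) p q|, ?_, ?_⟩
  · exact Finset.sum_nonneg fun p _ => Finset.sum_nonneg fun q _ => abs_nonneg _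
  intro t ht
  set c := ∑ p, ∑ q, |(Wᵀ * W) p q| with hcdef
  have hcb : ∀ p q, |(Wᵀ * W) p q| ≤ c := by
    intro p q
    calc |(Wᵀ * W) p q| ≤ ∑ q', |(Wᵀ * W) p q'| :=
          Finset.single_le_sum (f := fun q' => |(Wᵀ * W) p q'|)
            (fun q' _ => abs_nonneg _) (Finset.mem_univ q)
      _ ≤ c :=
          Finset.single_le_sum
            (f := fun p' => ∑ q', |(Wᵀ * W) p' q'|)
            (fun p' _ => Finset.sum_nonneg fun q' _ => abs_nonneg _) (Finset.mem_univ p)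
  have hsplit : Vtilde Z (fun _ => t)
      = 1 + (Real.sqrt t • W) * (Real.sqrt t • W)ᵀ := by
    ext a b
    simp only [Vtilde, Matrix.add_apply, Matrix.sum_apply, Matrix.smul_apply,
      Matrix.mul_apply, Matrix.transpose_apply, smul_eq_mul]
    congr 1
    rw [← Finset.univ_sigma_univ, Finset.sum_sigma]
    refine Finset.sum_congr rfl fun i _ => ?_
    rw [Finset.mul_sum]
    refine Finset.sum_congr rfl fun j _ => ?_
    show t * (Z i a j * Z i b j) = Real.sqrt t * W a ⟨i, j⟩ * (Real.sqrt t * W b ⟨i, j⟩)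
    have : Real.sqrt t * Real.sqrt t = t := Real.mul_self_sqrt ht
    show t * (Z i a j * Z i b j) = Real.sqrt t * Z i a j * (Real.sqrt t * Z i b j)
    linear_combination (-(Z i a j * Z i b j)) * this
  have hdet1 : (Vtilde Z (fun _ => t)).det
      = (1 + (Real.sqrt t • W)ᵀ * (Real.sqrt t • W)).det := by
    rw [hsplit, Matrix.det_one_add_mul_comm]
  have hentry : ∀ p q, |(1 + (Real.sqrt t • W)ᵀ * (Real.sqrt t • W)
      : Matrix ((i : Fin r) × Fin (k i)) ((i : Fin r) × Fin (k i)) ℝ) p q| ≤ 1 + t * c := by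
    intro p q
    have hS : ((Real.sqrt t • W)ᵀ * (Real.sqrt t • W)) p q = t * (Wᵀ * W) p q := by
      simp only [Matrix.mul_apply, Matrix.transpose_apply, Matrix.smul_apply, smul_eq_mul,
        Finset.mul_sum]
      refine Finset.sum_congr rfl fun a _ => ?_
      have : Real.sqrt t * Real.sqrt t = t := Real.mul_self_sqrt ht
      linear_combination (W a p * W a q) * this
    calc |(1 + (Real.sqrt t • W)ᵀ * (Real.sqrt t • W)
        : Matrix ((i : Fin r) × Fin (k i)) ((i : Fin r) × Fin (k i)) ℝ) p q|
        ≤ |(1 : Matrix _ _ ℝ) p q| + |((Real.sqrt t • W)ᵀ * (Real.sqrt t • W)) p q| := by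
          rw [Matrix.add_apply]; exact abs_add_le _ _
      _ ≤ 1 + t * c := by
          refine add_le_add ?_ ?_
          · by_cases h : p = q <;> simp [Matrix.one_apply, h]
          · rw [hS, abs_mul, abs_of_nonneg ht]
            exact mul_le_mul_of_nonneg_left (hcb p q) ht
  have hcard : Fintype.card ((i : Fin r) × Fin (k i)) = ∑ i, k i := by
    simp [Fintype.card_sigma]
  have := Matrix.det_le (A := 1 + (Real.sqrt t • W)ᵀ * (Real.sqrt t • W))
    (abv := AbsoluteValue.abs) (x := 1 + t * c) (fun i j => hentry i j)
  rw [hcard] at this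
  have h3 : |(1 + (Real.sqrt t • W)ᵀ * (Real.sqrt t • W)).det|
      ≤ (∑ i, k i).factorial • (1 + t * c) ^ (∑ i, k i) := this
  calc (Vtilde Z (fun _ => t)).det
      = (1 + (Real.sqrt t • W)ᵀ * (Real.sqrt t • W)).det := hdet1
    _ ≤ |(1 + (Real.sqrt t • W)ᵀ * (Real.sqrt t • W)).det| := le_abs_self _
    _ ≤ (∑ i, k i).factorial • (1 + t * c) ^ (∑ i, k i) := h3
    _ = (∑ i, k i).factorial * (1 + t * c) ^ (∑ i, k i) := nsmul_eq_mul _ _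


end AuxLemmas

/-- Part (c): if `y ∈ M(X,Z)`, the infimum of `l̃` over the parameter space is `−∞`. -/
theorem ltilde_unbounded_below_of_mem
    (n m r : ℕ) (k : Fin r → ℕ) (hmn : m < n) (hk : ∑ i, k i < n)
    (X : Matrix (Fin n) (Fin m) ℝ) (hX : X.rank = m)
    (Z : ∀ i : Fin r, Matrix (Fin n) (Fin (k i)) ℝ)
    (y : Fin n → ℝ) (hy : y ∈ colSpaceXZ X Z) :
    ∀ A : ℝ, ∃ (β : Fin m → ℝ) (κ₀ : ℝ) (κ : Fin r → ℝ),
      0 < κ₀ ∧ (∀ i, 0 ≤ κ i) ∧ ltilde X Z y β κ₀ κ < A := by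
  intro A
  classical
  rw [colSpaceXZ, Submodule.mem_sup] at hy
  obtain ⟨a, ha, b, hb, hab⟩ := hy
  obtain ⟨β₀, hβ₀⟩ := ha
  have hbu : ∃ u : ∀ i, Fin (k i) → ℝ, b = ∑ i, Z i *ᵥ u i := by
    refine Submodule.iSup_induction
      (motive := fun v => ∃ u : ∀ i, Fin (k i) → ℝ, v = ∑ i, Z i *ᵥ u i) _ hb ?_ ?_ ?_
    · rintro i x ⟨w, rfl⟩
      refine ⟨Function.update (fun j => 0) i w, ?_⟩
      rw [Finset.sum_eq_single i]
      · rw [Function.update_self]; rfl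
      · intro j _ hj
        rw [Function.update_of_ne hj]
        exact Matrix.mulVec_zero _
      · intro h; exact absurd (Finset.mem_univ i) h
    · exact ⟨fun _ => 0, by simp⟩
    · rintro x y ⟨u₁, rfl⟩ ⟨u₂, rfl⟩
      refine ⟨u₁ + u₂, ?_⟩
      rw [← Finset.sum_add_distrib]
      exact Finset.sum_congr rfl fun i _ => (Matrix.mulVec_add _ _ _).symm
  obtain ⟨u, hu⟩ := hbu
  obtain ⟨c, hc0, hcdet⟩ := det_bound Z
  set C := ∑ i, Real.sqrt (u i ⬝ᵥ u i) with hC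
  set K := ∑ i, k i with hK
  set B := Real.log (K.factorial : ℝ) + K * Real.log (1 + c) + C ^ 2 with hB
  set L := max 0 (B - A) + 1 with hL
  have hL1 : 1 ≤ L := le_add_of_nonneg_left (le_max_left 0 _)
  have hL0 : 0 < L := lt_of_lt_of_le one_pos hL1
  set t := Real.exp L with htdef
  have ht0 : 0 < t := Real.exp_pos L
  have hlogt : Real.log t = L := Real.log_exp L
  have ht1 : 1 ≤ t := by
    rw [htdef]
    exact Real.one_le_exp hL0.le
  refine ⟨β₀, t⁻¹, fun _ => t, inv_pos.mpr ht0, fun _ => le_trans zero_le_one ht1, ?_⟩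
  have hz : y - X.mulVec β₀ = ∑ i, Z i *ᵥ u i := by
    rw [← hab, ← hβ₀, hu]
    simp [Matrix.mulVecLin_apply]
  have hVpd : (Vtilde Z (fun _ => t)).PosDef :=
    vtilde_posdef Z _ (fun _ => ht0.le)
  -- quadratic term bound
  have hQ : t * ((∑ i, Z i *ᵥ u i) ⬝ᵥ (Vtilde Z (fun _ => t))⁻¹ *ᵥ (∑ i, Z i *ᵥ u i))
      ≤ C ^ 2 := by
    calc t * ((∑ i, Z i *ᵥ u i) ⬝ᵥ (Vtilde Z (fun _ => t))⁻¹ *ᵥ (∑ i, Z i *ᵥ u i))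
        ≤ t * (C ^ 2 / t) := mul_le_mul_of_nonneg_left (quad_bound Z u ht0) ht0.le
      _ = C ^ 2 := by rw [mul_comm, div_mul_cancel₀ _ ht0.ne']
  -- determinant bound
  have hdetlog : Real.log (Vtilde Z (fun _ => t)).det
      ≤ Real.log (K.factorial : ℝ) + K * (Real.log t + Real.log (1 + c)) := by
    have h1 : (Vtilde Z (fun _ => t)).det ≤ (K.factorial : ℝ) * (1 + t * c) ^ K :=
      hcdet t ht0.le
    have hfac : (0:ℝ) < (K.factorial : ℝ) := by exact_mod_cast K.factorial_pos
    have htc : (0:ℝ) < 1 + t * c := by positivity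
    calc Real.log (Vtilde Z (fun _ => t)).det
        ≤ Real.log ((K.factorial : ℝ) * (1 + t * c) ^ K) :=
          Real.log_le_log hVpd.det_pos h1
      _ = Real.log (K.factorial : ℝ) + K * Real.log (1 + t * c) := by
          rw [Real.log_mul hfac.ne' (by positivity), Real.log_pow]
      _ ≤ Real.log (K.factorial : ℝ) + K * (Real.log t + Real.log (1 + c)) := by
          refine add_le_add_right (mul_le_mul_of_nonneg_left ?_ (by positivity)) _
          calc Real.log (1 + t * c) ≤ Real.log (t * (1 + c)) := by
                refine Real.log_le_log htc ?_
                nlinarith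
            _ = Real.log t + Real.log (1 + c) := by
                rw [Real.log_mul ht0.ne' (by positivity)]
  -- final arithmetic
  have hKn : (K : ℝ) ≤ (n : ℝ) - 1 := by
    have : (K : ℝ) + 1 ≤ (n : ℝ) := by exact_mod_cast hk
    linarith
  have hmax : B - A ≤ max 0 (B - A) := le_max_right _ _
  have hgoal : ltilde X Z y β₀ t⁻¹ (fun _ => t)
      = n * (-Real.log t) + Real.log (Vtilde Z (fun _ => t)).det
        + t * ((∑ i, Z i *ᵥ u i) ⬝ᵥ (Vtilde Z (fun _ => t))⁻¹ *ᵥ (∑ i, Z i *ᵥ u i)) := by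
    rw [ltilde, hz, Real.log_inv, inv_inv]
  rw [hgoal]
  have hnK : ((K : ℝ) - n) * L ≤ -L := by nlinarith
  have hnn : (n : ℝ) * (-Real.log t) = -(n : ℝ) * L := by rw [hlogt]; ring
  rw [hlogt] at hdetlog
  nlinarith [hdetlog, hQ, hnK, hmax, hL1]
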